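/- Let H be a real inner product space, a : H × H → ℝ a symmetric positive semidefinite bilinear form with a(v,v) ≥ λ₁·‖v‖² for all v ∈ H for some λ₁ > 0, and b : H × H × H → ℝ a trilinear map with b(u,v,v) = 0 for all u, v ∈ H. Let μ, γ, δ, k > 0, set t_i = i·k, let f^1, …, f^N ∈ H with ‖f^n‖ ≤ F for all n, and let U^0, …, U^N ∈ H satisfy, for every 1 ≤ n ≤ N and every φ ∈ H, ⟨(U^n − U^{n−1})/k, φ⟩ + μ·a(U^n, φ) + a( k·∑_{j=1}^{n} γ·e^{−δ(t_n−t_j)}·U^j, φ ) + b(U^n, U^n, φ) = ⟨f^n, φ⟩. Define U^n_β = k·∑_{j=1}^{n} γ·e^{−δ(t_n−t_j)}·U^j with U^0_β = 0, and fix α with 0 < α ≤ δ and e^{αk} ≤ 1 + (μλ₁/2)·k. Then for all natural numbers m ≥ 1 and l ≥ 0 with m + l ≤ N: k·∑_{n=m}^{m+l} ( μ·a(U^n, U^n) + (2δ·e^{−δk}/γ)·a(U^n_β, U^n_β) ) ≤ ‖U^0‖² + (1/(α·μ·λ₁))·F² + ((l+1)·k/(μ·λ₁))·F². -/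

import Mathlib

open scoped RealInnerProductSpace

set_option maxHeartbeats 1000000

/-- Abstract form of the uniform time-window estimate (4.12) of Lemma 4.2 for
the backward Euler scheme applied to the Oldroyd model. -/
theorem backward_euler_window_estimate
    {H : Type*} [NormedAddCommGroup H] [InnerProductSpace ℝ H]
    (a : H →ₗ[ℝ] H →ₗ[ℝ] ℝ) (lam₁ : ℝ) (hlam₁ : 0 < lam₁)
    (hsymm : ∀ u v : H, a u v = a v u)
    (hcoer : ∀ v : H, lam₁ * ‖v‖ ^ 2 ≤ a v v)
    (b : H →ₗ[ℝ] H →ₗ[ℝ] H →ₗ[ℝ] ℝ)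
    (hb : ∀ u v : H, b u v v = 0)
    (μ γ δ k F : ℝ) (hμ : 0 < μ) (hγ : 0 < γ) (hδ : 0 < δ) (hk : 0 < k)
    (N : ℕ) (f : ℕ → H) (hf : ∀ n : ℕ, 1 ≤ n → n ≤ N → ‖f n‖ ≤ F)
    (U : ℕ → H)
    (scheme : ∀ n : ℕ, 1 ≤ n → n ≤ N → ∀ φ : H,
      ⟪(1 / k) • (U n - U (n - 1)), φ⟫ + μ * a (U n) φ +
        a (k • ∑ j ∈ Finset.Icc 1 n,
            (γ * Real.exp (-δ * ((n : ℝ) * k - (j : ℝ) * k))) • U j) φ +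
        b (U n) (U n) φ = ⟪f n, φ⟫)
    (Uβ : ℕ → H)
    (hUβ : ∀ n : ℕ, Uβ n = k • ∑ j ∈ Finset.Icc 1 n,
        (γ * Real.exp (-δ * ((n : ℝ) * k - (j : ℝ) * k))) • U j)
    (α : ℝ) (hα : 0 < α) (hαδ : α ≤ δ)
    (hαk : Real.exp (α * k) ≤ 1 + (μ * lam₁ / 2) * k) :
    ∀ m l : ℕ, 1 ≤ m → m + l ≤ N →
      k * ∑ n ∈ Finset.Icc m (m + l),
          (μ * a (U n) (U n) +
            (2 * δ * Real.exp (-δ * k) / γ) * a (Uβ n) (Uβ n)) ≤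
        ‖U 0‖ ^ 2 + (1 / (α * μ * lam₁)) * F ^ 2 +
          (((l : ℝ) + 1) * k / (μ * lam₁)) * F ^ 2 := by
  obtain ⟨C, hCdef⟩ : ∃ C, C = F ^ 2 / (μ * lam₁) := ⟨_, rfl⟩
  generalize hqd : Real.exp (-δ * k) = q
  have hqdef : q = Real.exp (-δ * k) := hqd.symm
  have hmul : 0 < μ * lam₁ := mul_pos hμ hlam₁
  have hC0 : 0 ≤ C := by rw [hCdef]; exact div_nonneg (sq_nonneg F) hmul.le
  have hq0 : (0:ℝ) < q := by rw [hqdef]; exact Real.exp_pos _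
  have hq1 : q ≤ 1 := by
    rw [hqdef]
    refine Real.exp_le_one_iff.mpr ?_
    nlinarith
  have hδkq : δ * k * q ≤ 1 - q := by
    have h1 : δ * k + 1 ≤ Real.exp (δ * k) := Real.add_one_le_exp _
    have h2 : Real.exp (δ * k) * q = 1 := by
      rw [hqdef, ← Real.exp_add]
      have e : δ * k + -δ * k = 0 := by ring
      rw [e, Real.exp_zero]
    nlinarith [mul_le_mul_of_nonneg_right h1 hq0.le]
  have haU : ∀ v : H, 0 ≤ a v v := fun v => le_trans (by positivity) (hcoer v)
  have hcauchy : ∀ x y : H, 2 * a x y ≤ a x x + a y y := by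
    intro x y
    have h := haU (x - y)
    have hx : a (x - y) (x - y) = a x x - 2 * a x y + a y y := by
      simp only [map_sub, LinearMap.sub_apply]
      rw [hsymm y x]; ring
    linarith
  have hUβ0 : Uβ 0 = 0 := by rw [hUβ]; simp
  -- the memory recursion
  have hrec : ∀ n : ℕ, Uβ (n + 1) = q • Uβ n + (k * γ) • U (n + 1) := by
    intro n
    rw [hUβ (n + 1), hUβ n, Finset.sum_Icc_succ_top (Nat.le_add_left 1 n)]
    have htop : (γ * Real.exp (-δ * ((↑(n + 1) : ℝ) * k - (↑(n + 1) : ℝ) * k))) = γ := by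
      simp
    rw [htop]
    have hsum : (∑ j ∈ Finset.Icc 1 n,
          (γ * Real.exp (-δ * ((↑(n + 1) : ℝ) * k - (j : ℝ) * k))) • U j)
        = q • ∑ j ∈ Finset.Icc 1 n,
            (γ * Real.exp (-δ * ((n : ℝ) * k - (j : ℝ) * k))) • U j := by
      rw [Finset.smul_sum]
      refine Finset.sum_congr rfl fun j _ => ?_
      rw [smul_smul]
      congr 1
      have h3 : Real.exp (-δ * ((↑(n + 1) : ℝ) * k - (j : ℝ) * k))
          = Real.exp (-δ * k) * Real.exp (-δ * ((n : ℝ) * k - (j : ℝ) * k)) := by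
        rw [← Real.exp_add]; congr 1; push_cast; ring
      rw [hqdef, h3]; ring
    rw [hsum]
    module
  -- basic one–step energy inequality (multiplied by 2kγ)
  have hstep : ∀ n : ℕ, n + 1 ≤ N →
      γ * (‖U (n + 1)‖ ^ 2 - ‖U n‖ ^ 2) + γ * k * μ * a (U (n + 1)) (U (n + 1))
        + 2 * (a (Uβ (n + 1)) (Uβ (n + 1)) - q * a (Uβ (n + 1)) (Uβ n)) ≤ γ * k * C := by
    intro n hn
    have hs := scheme (n + 1) (Nat.le_add_left 1 n) hn (U (n + 1))
    rw [← hUβ (n + 1)] at hs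
    simp only [Nat.add_sub_cancel, hb, add_zero] at hs
    have hinner : ⟪(1 / k) • (U (n + 1) - U n), U (n + 1)⟫
        = (1 / k) * ⟪U (n + 1) - U n, U (n + 1)⟫ := real_inner_smul_left _ _ _
    have hkX1 : k * ⟪(1 / k) • (U (n + 1) - U n), U (n + 1)⟫
        = ⟪U (n + 1) - U n, U (n + 1)⟫ := by
      rw [hinner, ← mul_assoc, mul_one_div_cancel hk.ne', one_mul]
    have hI : 2 * ⟪U (n + 1) - U n, U (n + 1)⟫
        = ‖U (n + 1)‖ ^ 2 - ‖U n‖ ^ 2 + ‖U (n + 1) - U n‖ ^ 2 := by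
      rw [inner_sub_left, real_inner_self_eq_norm_sq, norm_sub_sq_real,
        real_inner_comm (U (n + 1)) (U n)]
      ring
    have hmem : k * γ * a (Uβ (n + 1)) (U (n + 1))
        = a (Uβ (n + 1)) (Uβ (n + 1)) - q * a (Uβ (n + 1)) (Uβ n) := by
      have h1 : (k * γ) • U (n + 1) = Uβ (n + 1) - q • Uβ n := by
        rw [hrec n]; module
      have h2 : k * γ * a (Uβ (n + 1)) (U (n + 1))
          = a (Uβ (n + 1)) ((k * γ) • U (n + 1)) := by
        rw [map_smul, smul_eq_mul]
      rw [h2, h1, map_sub, map_smul, smul_eq_mul]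
    have hsum : γ * (‖U (n + 1)‖ ^ 2 - ‖U n‖ ^ 2) + γ * ‖U (n + 1) - U n‖ ^ 2
        + 2 * k * γ * μ * a (U (n + 1)) (U (n + 1))
        + 2 * (a (Uβ (n + 1)) (Uβ (n + 1)) - q * a (Uβ (n + 1)) (Uβ n))
        = 2 * k * γ * ⟪f (n + 1), U (n + 1)⟫ := by
      linear_combination (2 * k * γ) * hs - (2 * γ) * hkX1 - γ * hI - 2 * hmem
    have hfb : ⟪f (n + 1), U (n + 1)⟫ ≤ F * ‖U (n + 1)‖ := by
      have h1 := real_inner_le_norm (f (n + 1)) (U (n + 1))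
      have h2 := hf (n + 1) (Nat.le_add_left 1 n) hn
      nlinarith [norm_nonneg (U (n + 1))]
    have hquad : 2 * (F * ‖U (n + 1)‖) ≤ μ * lam₁ * ‖U (n + 1)‖ ^ 2 + C := by
      have hCeq : μ * lam₁ * C = F ^ 2 := by
        rw [hCdef]; field_simp
      nlinarith [sq_nonneg (μ * lam₁ * ‖U (n + 1)‖ - F), hmul]
    have hcoerU := hcoer (U (n + 1))
    have hkγ : (0:ℝ) ≤ k * γ := by positivity
    have h5 : 2 * k * γ * ⟪f (n + 1), U (n + 1)⟫
        ≤ k * γ * (μ * a (U (n + 1)) (U (n + 1))) + k * γ * C := by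
      nlinarith [mul_le_mul_of_nonneg_left hfb hkγ,
        mul_le_mul_of_nonneg_left hquad hkγ,
        mul_le_mul_of_nonneg_left hcoerU (mul_pos hμ (mul_pos hk hγ)).le]
    nlinarith [hsum, h5, mul_nonneg hγ.le (sq_nonneg ‖U (n + 1) - U n‖)]
  -- weighted one-step estimate for the decay argument
  have hGstep : ∀ n : ℕ, n + 1 ≤ N →
      Real.exp (α * k) * (γ * ‖U (n + 1)‖ ^ 2 + q * a (Uβ (n + 1)) (Uβ (n + 1)))
        ≤ γ * ‖U n‖ ^ 2 + q * a (Uβ n) (Uβ n) + γ * k * C := by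
    intro n hn
    have h1 := hstep n hn
    have h2 := hcauchy (Uβ (n + 1)) (Uβ n)
    have hA' := haU (Uβ (n + 1))
    have hA := haU (Uβ n)
    have hD' := haU (U (n + 1))
    have hcoerU := hcoer (U (n + 1))
    have hqα : Real.exp (α * k) * q ≤ 1 := by
      rw [hqdef, ← Real.exp_add]
      refine Real.exp_le_one_iff.mpr ?_
      nlinarith [mul_nonneg (sub_nonneg.mpr hαδ) hk.le]
    have p1 : Real.exp (α * k) * (γ * ‖U (n + 1)‖ ^ 2)
        ≤ γ * ‖U (n + 1)‖ ^ 2 + (μ * lam₁ * k / 2) * (γ * ‖U (n + 1)‖ ^ 2) := by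
      nlinarith [mul_le_mul_of_nonneg_right hαk
        (by positivity : (0:ℝ) ≤ γ * ‖U (n + 1)‖ ^ 2)]
    have p2 : (μ * lam₁ * k / 2) * (γ * ‖U (n + 1)‖ ^ 2)
        ≤ (μ * k / 2) * (γ * a (U (n + 1)) (U (n + 1))) := by
      nlinarith [mul_le_mul_of_nonneg_left hcoerU
        (by positivity : (0:ℝ) ≤ μ * k / 2 * γ)]
    have p3 : Real.exp (α * k) * (q * a (Uβ (n + 1)) (Uβ (n + 1)))
        ≤ a (Uβ (n + 1)) (Uβ (n + 1)) := by
      nlinarith [mul_le_mul_of_nonneg_right hqα hA']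
    have p4 : 2 * (q * a (Uβ (n + 1)) (Uβ n))
        ≤ q * a (Uβ (n + 1)) (Uβ (n + 1)) + q * a (Uβ n) (Uβ n) := by
      nlinarith [mul_le_mul_of_nonneg_left h2 hq0.le]
    nlinarith [h1, p1, p2, p3, p4,
      mul_nonneg (mul_nonneg (mul_nonneg hγ.le hk.le) hμ.le) hD',
      mul_nonneg (by linarith : (0:ℝ) ≤ 1 - q) hA']
  -- uniform bound on the weighted energy
  have hGdecay : ∀ n : ℕ, n ≤ N →
      γ * ‖U n‖ ^ 2 + q * a (Uβ n) (Uβ n) ≤ γ * ‖U 0‖ ^ 2 + γ * C / α := by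
    intro n
    induction n with
    | zero =>
      intro _
      rw [hUβ0]
      simp only [map_zero, LinearMap.zero_apply, mul_zero, add_zero]
      have h0 : (0:ℝ) ≤ γ * C / α := div_nonneg (mul_nonneg hγ.le hC0) hα.le
      linarith
    | succ n ih =>
      intro hn1
      have ihn := ih (Nat.le_of_succ_le hn1)
      have hstepG := hGstep n hn1
      have hX' : (0:ℝ) ≤ γ * ‖U (n + 1)‖ ^ 2 + q * a (Uβ (n + 1)) (Uβ (n + 1)) :=
        add_nonneg (by positivity) (mul_nonneg hq0.le (haU _))
      have heαk1 := Real.add_one_le_exp (α * k)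
      have hαkB : γ * k * C ≤ α * k * (γ * ‖U 0‖ ^ 2 + γ * C / α) := by
        have hB : α * k * (γ * C / α) = γ * k * C := by field_simp
        nlinarith [mul_nonneg (mul_nonneg hα.le hk.le)
          (mul_nonneg hγ.le (sq_nonneg ‖U 0‖))]
      nlinarith [hstepG, ihn, mul_le_mul_of_nonneg_right heαk1 hX', hαkB,
        mul_pos hα hk]
  -- one-step window inequality
  have hwstep : ∀ n : ℕ, n + 1 ≤ N →
      γ * ‖U (n + 1)‖ ^ 2 + q * a (Uβ (n + 1)) (Uβ (n + 1))
        + (γ * k * μ * a (U (n + 1)) (U (n + 1))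
            + 2 * k * δ * q * a (Uβ (n + 1)) (Uβ (n + 1)))
        ≤ γ * ‖U n‖ ^ 2 + q * a (Uβ n) (Uβ n) + γ * k * C := by
    intro n hn
    have h1 := hstep n hn
    have h2 := hcauchy (Uβ (n + 1)) (Uβ n)
    have hA' := haU (Uβ (n + 1))
    have p4 : 2 * (q * a (Uβ (n + 1)) (Uβ n))
        ≤ q * a (Uβ (n + 1)) (Uβ (n + 1)) + q * a (Uβ n) (Uβ n) := by
      nlinarith [mul_le_mul_of_nonneg_left h2 hq0.le]
    nlinarith [h1, p4,
      mul_nonneg (by nlinarith : (0:ℝ) ≤ 1 - q - δ * k * q) hA']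
  -- summed window inequality
  have hwin : ∀ l m : ℕ, 1 ≤ m → m + l ≤ N →
      γ * ‖U (m + l)‖ ^ 2 + q * a (Uβ (m + l)) (Uβ (m + l))
        + ∑ n ∈ Finset.Icc m (m + l),
            (γ * k * μ * a (U n) (U n) + 2 * k * δ * q * a (Uβ n) (Uβ n))
        ≤ γ * ‖U (m - 1)‖ ^ 2 + q * a (Uβ (m - 1)) (Uβ (m - 1))
          + ((l : ℝ) + 1) * (γ * k * C) := by
    intro l
    induction l with
    | zero =>
      intro m hm hmN
      obtain ⟨m', rfl⟩ : ∃ m', m = m' + 1 := ⟨m - 1, (Nat.succ_pred_eq_of_pos hm).symm⟩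
      simp only [Nat.add_zero, Nat.add_sub_cancel, Finset.Icc_self, Finset.sum_singleton,
        Nat.cast_zero]
      have hw := hwstep m' (by omega)
      linarith
    | succ l ih =>
      intro m hm hmN
      have ih' := ih m hm (by omega)
      have hw := hwstep (m + l) (by omega)
      have e : m + (l + 1) = m + l + 1 := rfl
      rw [e, Finset.sum_Icc_succ_top (by omega : m ≤ m + l + 1)]
      push_cast
      push_cast at ih'
      linarith
  -- conclusion
  intro m l hm hml
  have hwin' := hwin l m hm hml
  have hdecay := hGdecay (m - 1) (by omega)
  have hEml : (0:ℝ) ≤ γ * ‖U (m + l)‖ ^ 2 := by positivity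
  have hAml : (0:ℝ) ≤ q * a (Uβ (m + l)) (Uβ (m + l)) := mul_nonneg hq0.le (haU _)
  have hS : ∑ n ∈ Finset.Icc m (m + l),
      (γ * k * μ * a (U n) (U n) + 2 * k * δ * q * a (Uβ n) (Uβ n))
      ≤ γ * ‖U 0‖ ^ 2 + γ * C / α + ((l : ℝ) + 1) * (γ * k * C) := by linarith
  rw [← mul_le_mul_iff_right₀ hγ]
  have hLHS : γ * (k * ∑ n ∈ Finset.Icc m (m + l),
        (μ * a (U n) (U n) + 2 * δ * q / γ * a (Uβ n) (Uβ n)))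
      = ∑ n ∈ Finset.Icc m (m + l),
        (γ * k * μ * a (U n) (U n) + 2 * k * δ * q * a (Uβ n) (Uβ n)) := by
    rw [Finset.mul_sum, Finset.mul_sum]
    refine Finset.sum_congr rfl fun n _ => ?_
    field_simp
  have hRHS : γ * (‖U 0‖ ^ 2 + (1 / (α * μ * lam₁)) * F ^ 2
        + (((l : ℝ) + 1) * k / (μ * lam₁)) * F ^ 2)
      = γ * ‖U 0‖ ^ 2 + γ * C / α + ((l : ℝ) + 1) * (γ * k * C) := by
    rw [hCdef]
    field_simp
  rw [hLHS, hRHS]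
  exact hS
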